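/- arXiv:2503.05408 — 3 statements merged into one kernel-verified Lean document; each statement's English description precedes it below -/
import Mathlib

section
/- If G is a directed acyclic graph and P is a partition of its vertex set such that every part of P is a cascade, then the coarsened graph G // P is acyclic. -/
/-- A subset `U` of vertices is a cascade: for every vertex `v ∈ U` with an incoming
edge from outside `U` and every `u ∈ U` with an outgoing edge leaving `U`,
there is a (possibly trivial) directed walk from `v` to `u` in `G`. -/
def IsCascade {V : Type*} (E : V → V → Prop) (U : Set V) : Prop :=
  ∀ v ∈ U, ∀ u ∈ U, (∃ w, w ∉ U ∧ E w v) → (∃ w, w ∉ U ∧ E u w) →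
    Relation.ReflTransGen E v u

/-- The edge relation of the coarsened graph `G // P`. -/
def coarseEdge {V : Type*} (E : V → V → Prop) (P : Set (Set V))
    (U W : {S // S ∈ P}) : Prop :=
  U ≠ W ∧ ∃ u ∈ U.1, ∃ w ∈ W.1, E u w

lemma parts_disjoint {V : Type*} {P : Set (Set V)} (hP : Setoid.IsPartition P)
    {A B : Set V} (hA : A ∈ P) (hB : B ∈ P) (hne : A ≠ B) {x : V}
    (hxA : x ∈ A) (hxB : x ∈ B) : False := by
  obtain ⟨C, _, hC⟩ := hP.2 x
  exact hne ((hC A ⟨hA, hxA⟩).trans (hC B ⟨hB, hxB⟩).symm)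

lemma lift_walk {V : Type*} {E : V → V → Prop} {P : Set (Set V)}
    (hP : Setoid.IsPartition P) (hcasc : ∀ U ∈ P, IsCascade E U)
    {U W : {S // S ∈ P}} (h : Relation.TransGen (coarseEdge E P) U W) :
    ∃ u ∈ U.1, ∃ w ∈ W.1, (∃ x, x ∉ U.1 ∧ E u x) ∧ (∃ x, x ∉ W.1 ∧ E x w) ∧
      Relation.TransGen E u w := by
  induction h with
  | single h =>
    rename_i W
    obtain ⟨hne, u, hu, w, hw, he⟩ := h
    have hneS : U.1 ≠ W.1 := fun hs => hne (Subtype.ext hs)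
    refine ⟨u, hu, w, hw, ⟨w, fun hwU => parts_disjoint hP U.2 W.2 hneS hwU hw, he⟩,
      ⟨u, fun huW => parts_disjoint hP U.2 W.2 hneS hu huW, he⟩,
      Relation.TransGen.single he⟩
  | tail _ h ih =>
    rename_i W' W _
    obtain ⟨u, hu, w', hw', hout, hin, hwalk⟩ := ih
    obtain ⟨hne, a, ha, b, hb, he⟩ := h
    have hneS : W'.1 ≠ W.1 := fun hs => hne (Subtype.ext hs)
    have hbW' : b ∉ W'.1 := fun hbW' => parts_disjoint hP W'.2 W.2 hneS hbW' hb
    have haW : a ∉ W.1 := fun haW => parts_disjoint hP W'.2 W.2 hneS ha haW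
    have hcw : Relation.ReflTransGen E w' a :=
      hcasc W'.1 W'.2 w' hw' a ha hin ⟨b, hbW', he⟩
    exact ⟨u, hu, b, hb, hout, ⟨a, haW, he⟩,
      (hwalk.trans_left hcw).tail he⟩

theorem stmt0 {V : Type*} (E : V → V → Prop) (P : Set (Set V))
    (hP : Setoid.IsPartition P)
    (hcasc : ∀ U ∈ P, IsCascade E U)
    (hacyc : ∀ v : V, ¬ Relation.TransGen E v v) :
    ∀ U : {S // S ∈ P}, ¬ Relation.TransGen (coarseEdge E P) U U := by
  intro U h
  obtain ⟨u, hu, w, hw, hout, hin, hwalk⟩ := lift_walk hP hcasc h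
  have : Relation.ReflTransGen E w u := hcasc U.1 U.2 w hw u hu hin hout
  exact hacyc u (hwalk.trans_left this)
end

section
/- Any directed walk in the coarsened graph G // P (where every part of P is a cascade) can be lifted to a directed walk in G: if there is a directed walk in G // P from part U to part W, then there exist vertices u ∈ U and w ∈ W with a directed walk from u to w in G. -/
theorem stmt1 {V : Type*} (E : V → V → Prop) (P : Set (Set V))
    (hP : Setoid.IsPartition P)
    (hcasc : ∀ U ∈ P, IsCascade E U) :
    ∀ U W : {S // S ∈ P}, Relation.ReflTransGen (coarseEdge E P) U W →
      ∃ u ∈ U.1, ∃ w ∈ W.1, Relation.ReflTransGen E u w := by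
  have huniq : ∀ (a : V) (S T : Set V), S ∈ P → T ∈ P → a ∈ S → a ∈ T → S = T := by
    intro a S T hS hT haS haT
    obtain ⟨b, _, hb⟩ := hP.2 a
    rw [hb S ⟨hS, haS⟩, hb T ⟨hT, haT⟩]
  -- strengthened claim
  have key : ∀ U W : {S // S ∈ P}, Relation.ReflTransGen (coarseEdge E P) U W →
      U = W ∨ ∃ u ∈ U.1, ∃ w ∈ W.1, Relation.ReflTransGen E u w ∧ ∃ z, z ∉ W.1 ∧ E z w := by
    intro U W h
    induction h with
    | refl => exact Or.inl rfl
    | tail hab hbc ih =>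
      rename_i B C
      obtain ⟨hne, b, hbB, c, hcC, hE⟩ := hbc
      have hCB : C.1 ≠ B.1 := fun h => hne (Subtype.ext h.symm)
      have hcB : c ∉ B.1 := fun hc => hCB (huniq c C.1 B.1 C.2 B.2 hcC hc)
      have hbC : b ∉ C.1 := fun hb => hCB (huniq b C.1 B.1 C.2 B.2 hb hbB)
      rcases ih with rfl | ⟨u, huU, w, hwB, hwalk, z, hzB, hEz⟩
      · exact Or.inr ⟨b, hbB, c, hcC, Relation.ReflTransGen.single hE, b, hbC, hE⟩
      · have hwb : Relation.ReflTransGen E w b :=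
          hcasc B.1 B.2 w hwB b hbB ⟨z, hzB, hEz⟩ ⟨c, hcB, hE⟩
        exact Or.inr ⟨u, huU, c, hcC, (hwalk.trans hwb).tail hE, b, hbC, hE⟩
  intro U W h
  rcases key U W h with rfl | ⟨u, hu, w, hw, hwalk, _⟩
  · -- U = W: need a vertex in U, which is nonempty since ∅ ∉ P
    have : U.1.Nonempty := Set.nonempty_iff_ne_empty.2 (fun h0 => hP.1 (h0 ▸ U.2))
    obtain ⟨u, hu⟩ := this
    exact ⟨u, hu, u, hu, Relation.ReflTransGen.refl⟩
  · exact ⟨u, hu, w, hw, hwalk⟩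
end

section
/- Every in-funnel is a cascade; consequently, coarsening a DAG along a partition into in-funnels yields an acyclic graph. -/
/-- An in-funnel: a cascade with at most one vertex having an outgoing cut edge. -/
def IsInFunnel {V : Type*} (E : V → V → Prop) (U : Set V) : Prop :=
  IsCascade E U ∧ {u | u ∈ U ∧ ∃ w, w ∉ U ∧ E u w}.Subsingleton

theorem stmt2 {V : Type*} (E : V → V → Prop) (P : Set (Set V))
    (hP : Setoid.IsPartition P)
    (hfun : ∀ U ∈ P, IsInFunnel E U)
    (hacyc : ∀ v : V, ¬ Relation.TransGen E v v) :
    (∀ U : Set V, IsInFunnel E U → IsCascade E U) ∧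
    (∀ U : {S // S ∈ P}, ¬ Relation.TransGen (coarseEdge E P) U U) := by
  have hdisj : ∀ (S T : {S // S ∈ P}) (a : V), a ∈ S.1 → a ∈ T.1 → S = T := by
    intro S T a haS haT
    obtain ⟨b, hb, hbu⟩ := hP.2 a
    have h1 : S.1 = b := hbu S.1 ⟨S.2, haS⟩
    have h2 : T.1 = b := hbu T.1 ⟨T.2, haT⟩
    exact Subtype.ext (h1.trans h2.symm)
  have key : ∀ U W : {S // S ∈ P}, Relation.TransGen (coarseEdge E P) U W →
      ∃ u ∈ U.1, ∃ w ∈ W.1, (∃ x, x ∉ U.1 ∧ E u x) ∧ (∃ x, x ∉ W.1 ∧ E x w) ∧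
        Relation.TransGen E u w := by
    intro U W h
    induction h with
    | single h =>
      obtain ⟨hne, u, hu, w, hw, huw⟩ := h
      refine ⟨u, hu, w, hw, ⟨w, ?_, huw⟩, ⟨u, ?_, huw⟩, Relation.TransGen.single huw⟩
      · intro hwU; exact hne (hdisj _ _ w hwU hw)
      · intro huW; exact hne (hdisj _ _ u hu huW)
    | tail h hWX ih =>
      rename_i W' X
      obtain ⟨u, hu, w, hw, hout, hin, htg⟩ := ih
      obtain ⟨hne, w', hw', x, hx, hwx⟩ := hWX
      have hw'out : ∃ y, y ∉ W'.1 ∧ E w' y :=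
        ⟨x, fun hxW => hne (hdisj _ _ x hxW hx), hwx⟩
      have hcas : Relation.ReflTransGen E w w' :=
        (hfun W'.1 W'.2).1 w hw w' hw' hin hw'out
      refine ⟨u, hu, x, hx, hout, ⟨w', fun hw'X => hne (hdisj _ _ w' hw' hw'X), hwx⟩, ?_⟩
      exact (Relation.TransGen.trans_left htg hcas).tail hwx
  refine ⟨fun U h => h.1, fun U hcyc => ?_⟩
  obtain ⟨u, hu, w, hw, hout, hin, htg⟩ := key U U hcyc
  have : Relation.ReflTransGen E w u := (hfun U.1 U.2).1 w hw u hu hin hout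
  exact hacyc u (Relation.TransGen.trans_left htg this)
end
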